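/- For any integer a ≥ 2, Σ_{t=1}^{a} C(a,t) · (m_{a−1,t−1})^2 ≤ (e/(e−1))^2 · 2/a, where m_{s,t} = ∫_0^1 (e^p/(e−1)) p^t (1−p)^{s−t} dp. -/

import Mathlib

open intervalIntegral Real

lemma beta_int (n m : ℕ) : ∫ x in (0:ℝ)..1, x ^ m * (1 - x) ^ n
    = (m.factorial * n.factorial : ℝ) / (m + n + 1).factorial := by
  induction n generalizing m with
  | zero =>
      simp only [pow_zero, mul_one, integral_pow, Nat.add_zero, Nat.factorial_succ, Nat.factorial_zero]
      have : (m.factorial : ℝ) ≠ 0 := by positivity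
      push_cast
      rw [eq_div_iff (by positivity)]
      field_simp
      simp
  | succ n ih =>
      have hderiv : ∀ x ∈ Set.uIcc (0:ℝ) 1,
          HasDerivAt (fun y : ℝ => y ^ (m+1) * (1 - y) ^ (n+1))
            ((m+1 : ℝ) * (x ^ m * (1 - x) ^ (n+1)) - (n+1 : ℝ) * (x ^ (m+1) * (1 - x) ^ n)) x := by
        intro x _
        have h1 : HasDerivAt (fun y : ℝ => y ^ (m+1)) ((m+1 : ℝ) * x ^ m) x := by
          simpa using hasDerivAt_pow (m+1) x
        have h2 : HasDerivAt (fun y : ℝ => (1 - y) ^ (n+1)) (-((n+1:ℝ) * (1 - x) ^ n)) x := by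
          have := ((hasDerivAt_id x).const_sub 1).fun_pow (n+1)
          simpa using this
        have := h1.fun_mul h2
        exact this.congr_deriv (by ring)
      have hi1 : IntervalIntegrable (fun x : ℝ => (m+1:ℝ) * (x ^ m * (1-x) ^ (n+1)))
          MeasureTheory.volume 0 1 := (by fun_prop : Continuous _).intervalIntegrable _ _
      have hi2 : IntervalIntegrable (fun x : ℝ => (n+1:ℝ) * (x ^ (m+1) * (1-x) ^ n))
          MeasureTheory.volume 0 1 := (by fun_prop : Continuous _).intervalIntegrable _ _
      have hint : ∫ x in (0:ℝ)..1,
          ((m+1:ℝ) * (x ^ m * (1-x) ^ (n+1)) - (n+1:ℝ) * (x ^ (m+1) * (1-x) ^ n)) = 0 := by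
        rw [intervalIntegral.integral_eq_sub_of_hasDerivAt hderiv (hi1.sub hi2)]
        simp
      rw [intervalIntegral.integral_sub hi1 hi2, intervalIntegral.integral_const_mul,
        intervalIntegral.integral_const_mul, sub_eq_zero] at hint
      rw [ih] at hint
      have hm : (m:ℝ) + 1 ≠ 0 := by positivity
      have key : (∫ x in (0:ℝ)..1, x ^ m * (1 - x) ^ (n+1))
          = ((n:ℝ)+1) * ((m+1).factorial * n.factorial : ℝ) / (((m:ℝ)+1) * (m + 1 + n + 1).factorial) := by
        field_simp at hint ⊢
        linarith [hint]
      rw [key]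
      have e1 : ((m+1).factorial : ℝ) = ((m:ℝ)+1) * m.factorial := by
        rw [Nat.factorial_succ]; push_cast; ring
      have e2 : ((n+1).factorial : ℝ) = ((n:ℝ)+1) * n.factorial := by
        rw [Nat.factorial_succ]; push_cast; ring
      have e3 : (m + (n+1) + 1).factorial = (m + 1 + n + 1).factorial := by ring_nf
      rw [e3, e1, e2]
      have hf : ((m + 1 + n + 1).factorial : ℝ) ≠ 0 := by positivity
      field_simp

/-- For any integer `a ≥ 2`,
`∑_{t=1}^{a} C(a,t) (m_{a-1,t-1})² ≤ (e/(e-1))² · 2/a`. -/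
theorem stmt_10 (a : ℕ) (ha : 2 ≤ a) :
    (∑ t ∈ Finset.Icc 1 a, (a.choose t : ℝ) *
        (∫ p in (0:ℝ)..1,
          Real.exp p / (Real.exp 1 - 1) * p ^ (t - 1) * (1 - p) ^ ((a - 1) - (t - 1))) ^ 2)
      ≤ (Real.exp 1 / (Real.exp 1 - 1)) ^ 2 * (2 / (a : ℝ)) := by
  have hE1 : (1:ℝ) < Real.exp 1 := by
    have := Real.exp_one_gt_d9; linarith
  have hEm : (0:ℝ) < Real.exp 1 - 1 := by linarith
  set K : ℝ := Real.exp 1 / (Real.exp 1 - 1) with hKdef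
  have hK : 0 < K := by positivity
  have haR : (2:ℝ) ≤ (a:ℝ) := by exact_mod_cast ha
  have ha0 : (0:ℝ) < a := by linarith
  -- per-term bound
  have hterm : ∀ t ∈ Finset.Icc 1 a,
      (a.choose t : ℝ) * (∫ p in (0:ℝ)..1,
          Real.exp p / (Real.exp 1 - 1) * p ^ (t - 1) * (1 - p) ^ ((a - 1) - (t - 1))) ^ 2
      ≤ K ^ 2 * (1 / ((t:ℝ)^2 * (a.choose t : ℝ))) := by
    intro t ht
    simp only [Finset.mem_Icc] at ht
    obtain ⟨ht1, hta⟩ := ht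
    have hsub : (a-1)-(t-1) = a - t := by omega
    rw [hsub]
    set I : ℝ := ∫ x in (0:ℝ)..1, x ^ (t-1) * (1-x) ^ (a-t) with hI
    have hIval : I = ((t-1).factorial * (a-t).factorial : ℝ) / (a.factorial : ℝ) := by
      rw [hI, beta_int]
      congr 3
      omega
    have hm0 : 0 ≤ ∫ p in (0:ℝ)..1, Real.exp p / (Real.exp 1 - 1) * p ^ (t-1) * (1-p) ^ (a-t) := by
      apply intervalIntegral.integral_nonneg (by norm_num)
      intro x hx
      have h1x : (0:ℝ) ≤ 1 - x := by linarith [hx.2]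
      have hx0 : (0:ℝ) ≤ x := hx.1
      have := Real.exp_pos x
      positivity
    have hle : (∫ p in (0:ℝ)..1, Real.exp p / (Real.exp 1 - 1) * p ^ (t-1) * (1-p) ^ (a-t))
        ≤ K * I := by
      rw [hI, ← intervalIntegral.integral_const_mul]
      apply intervalIntegral.integral_mono_on (by norm_num)
        ((by fun_prop : Continuous _).intervalIntegrable _ _)
        ((by fun_prop : Continuous _).intervalIntegrable _ _)
      intro x hx
      obtain ⟨hx0, hx1⟩ := hx
      have h1x : (0:ℝ) ≤ 1 - x := by linarith
      have hxe : Real.exp x ≤ Real.exp 1 := Real.exp_le_exp.mpr hx1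
      have hA : (0:ℝ) ≤ x ^ (t-1) * (1-x) ^ (a-t) :=
        mul_nonneg (pow_nonneg hx0 _) (pow_nonneg h1x _)
      have : Real.exp x / (Real.exp 1 - 1) * x ^ (t-1) * (1-x) ^ (a-t)
          = (Real.exp x / (Real.exp 1 - 1)) * (x ^ (t-1) * (1-x) ^ (a-t)) := by ring
      rw [this, hKdef]
      apply mul_le_mul_of_nonneg_right _ hA
      gcongr
    have hsq : (∫ p in (0:ℝ)..1, Real.exp p / (Real.exp 1 - 1) * p ^ (t-1) * (1-p) ^ (a-t)) ^ 2
        ≤ (K * I) ^ 2 := pow_le_pow_left₀ hm0 hle 2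
    have hC0 : (0:ℝ) < (a.choose t : ℝ) := by exact_mod_cast Nat.choose_pos hta
    have ht0 : (0:ℝ) < (t:ℝ) := by exact_mod_cast ht1
    have key : ((a.choose t : ℝ)) * ((t:ℝ) * ((t-1).factorial * (a-t).factorial : ℝ))
        = (a.factorial : ℝ) := by
      have h := Nat.choose_mul_factorial_mul_factorial hta
      have ht' : t.factorial = t * (t-1).factorial := by
        obtain ⟨s, rfl⟩ : ∃ s, t = s + 1 := ⟨t - 1, by omega⟩
        simp [Nat.factorial_succ]
      rw [ht'] at h
      exact_mod_cast (by rw [← h]; ring_nf : (a.choose t) * (t * ((t-1).factorial * (a-t).factorial)) = a.factorial)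
    calc (a.choose t : ℝ) * (∫ p in (0:ℝ)..1,
          Real.exp p / (Real.exp 1 - 1) * p ^ (t-1) * (1-p) ^ (a-t)) ^ 2
        ≤ (a.choose t : ℝ) * (K * I) ^ 2 := by
          exact mul_le_mul_of_nonneg_left hsq hC0.le
      _ = K ^ 2 * (1 / ((t:ℝ)^2 * (a.choose t : ℝ))) := by
          rw [hIval, ← key]
          have hf1 : ((t-1).factorial : ℝ) ≠ 0 := by positivity
          have hf2 : ((a-t).factorial : ℝ) ≠ 0 := by positivity
          field_simp
  -- sum bound
  have hsum : ∑ t ∈ Finset.Icc 1 a, (1 / ((t:ℝ)^2 * (a.choose t : ℝ))) ≤ 2 / (a:ℝ) := by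
    have hinsert : Finset.Icc 1 a = insert a (Finset.Icc 1 (a-1)) := by
      ext x
      simp only [Finset.mem_Icc, Finset.mem_insert]
      omega
    rw [hinsert, Finset.sum_insert (by simp only [Finset.mem_Icc]; omega)]
    have hfa : (1 / ((a:ℝ)^2 * (a.choose a : ℝ))) = 1 / (a:ℝ)^2 := by
      simp [Nat.choose_self]
    rw [hfa]
    set c : ℕ → ℝ := fun i => if i ≤ 1 then 2 else 1/((i:ℝ)-1) with hc
    have step : ∀ t ∈ Finset.Icc 1 (a-1),
        (1 / ((t:ℝ)^2 * (a.choose t : ℝ))) ≤ (1/(a:ℝ)) * (c t - c (t+1)) := by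
      intro t ht
      simp only [Finset.mem_Icc] at ht
      obtain ⟨ht1, hta⟩ := ht
      rcases eq_or_lt_of_le ht1 with h1 | h2
      · -- t = 1
        subst h1
        simp only [hc, Nat.cast_one, Nat.choose_one_right]
        norm_num
      · -- t ≥ 2
        have ht2 : 2 ≤ t := h2
        have htR : (2:ℝ) ≤ (t:ℝ) := by exact_mod_cast ht2
        have hct : c t = 1/((t:ℝ)-1) := by simp only [hc]; rw [if_neg (by omega)]
        have hct1 : c (t+1) = 1/(t:ℝ) := by
          simp only [hc]; rw [if_neg (by omega)]; push_cast; ring_nf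
        rw [hct, hct1]
        -- nat identity: t * C(a,t) = a * C(a-1,t-1)
        have hid : a * (a-1).choose (t-1) = a.choose t * t := by
          have := Nat.add_one_mul_choose_eq (a-1) (t-1)
          have e1 : a - 1 + 1 = a := by omega
          have e2 : t - 1 + 1 = t := by omega
          rwa [e1, e2] at this
        have hge : t ≤ (a-1).choose (t-1) := by
          have h1 : t.choose (t-1) ≤ (a-1).choose (t-1) :=
            Nat.choose_le_choose (t-1) (by omega)
          have h2 : t.choose (t-1) = t := by
            have := Nat.choose_succ_self_right (t-1)
            have e : t - 1 + 1 = t := by omega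
            rwa [e] at this
          omega
        have hgeR : (t:ℝ) ≤ ((a-1).choose (t-1) : ℝ) := by exact_mod_cast hge
        have hidR : (a:ℝ) * ((a-1).choose (t-1) : ℝ) = (a.choose t : ℝ) * (t:ℝ) := by
          exact_mod_cast hid
        have heq : (t:ℝ)^2 * (a.choose t : ℝ) = (a:ℝ) * (t:ℝ) * ((a-1).choose (t-1) : ℝ) := by
          nlinarith [hidR]
        have hbig : (a:ℝ) * (t:ℝ) * ((t:ℝ)-1) ≤ (t:ℝ)^2 * (a.choose t : ℝ) := by
          rw [heq]
          apply mul_le_mul_of_nonneg_left (by linarith) (by positivity)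
        have hpos : (0:ℝ) < (a:ℝ) * (t:ℝ) * ((t:ℝ)-1) :=
          mul_pos (mul_pos ha0 (by linarith : (0:ℝ) < (t:ℝ))) (by linarith : (0:ℝ) < (t:ℝ)-1)
        have h1 : 1 / ((t:ℝ)^2 * (a.choose t : ℝ)) ≤ 1 / ((a:ℝ) * (t:ℝ) * ((t:ℝ)-1)) :=
          one_div_le_one_div_of_le hpos hbig
        have h2 : 1 / ((a:ℝ) * (t:ℝ) * ((t:ℝ)-1)) = (1/(a:ℝ)) * (1/((t:ℝ)-1) - 1/(t:ℝ)) := by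
          have : (t:ℝ) - 1 ≠ 0 := by linarith
          field_simp
          ring
        linarith [h1, h2.le, h2.ge]
    have htel : ∑ t ∈ Finset.Icc 1 (a-1), (1/(a:ℝ)) * (c t - c (t+1))
        = (1/(a:ℝ)) * (c 1 - c a) := by
      rw [← Finset.mul_sum]
      congr 1
      have : Finset.Icc 1 (a-1) = Finset.Ico 1 a := by
        ext x; simp only [Finset.mem_Icc, Finset.mem_Ico]; omega
      rw [this, Finset.sum_Ico_eq_sum_range]
      calc ∑ i ∈ Finset.range (a-1), (c (1+i) - c (1+i+1))
          = c (1+0) - c (1+(a-1)) := Finset.sum_range_sub' (fun i => c (1+i)) (a-1)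
        _ = c 1 - c a := by rw [show 1 + (a-1) = a from by omega]
    have hc1 : c 1 = 2 := by simp [hc]
    have hca : c a = 1/((a:ℝ)-1) := by
      simp only [hc]; rw [if_neg (by omega)]
    calc (1 / ((a:ℝ)^2)) + ∑ t ∈ Finset.Icc 1 (a-1), (1 / ((t:ℝ)^2 * (a.choose t : ℝ)))
        ≤ 1 / (a:ℝ)^2 + (1/(a:ℝ)) * (2 - 1/((a:ℝ)-1)) := by
          have := Finset.sum_le_sum step
          rw [htel, hc1, hca] at this
          linarith
      _ ≤ 2 / (a:ℝ) := by
          have hm1 : (0:ℝ) < (a:ℝ) - 1 := by linarith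
          have e : 1/((a:ℝ))*(2 - 1/((a:ℝ)-1)) = 2/(a:ℝ) - 1/((a:ℝ)*((a:ℝ)-1)) := by
            field_simp
          have e2 : 1/(a:ℝ)^2 ≤ 1/((a:ℝ)*((a:ℝ)-1)) := by
            apply one_div_le_one_div_of_le (by nlinarith) (by nlinarith)
          linarith
  calc (∑ t ∈ Finset.Icc 1 a, (a.choose t : ℝ) *
        (∫ p in (0:ℝ)..1,
          Real.exp p / (Real.exp 1 - 1) * p ^ (t - 1) * (1 - p) ^ ((a - 1) - (t - 1))) ^ 2)
      ≤ ∑ t ∈ Finset.Icc 1 a, K ^ 2 * (1 / ((t:ℝ)^2 * (a.choose t : ℝ))) :=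
        Finset.sum_le_sum hterm
    _ = K ^ 2 * ∑ t ∈ Finset.Icc 1 a, (1 / ((t:ℝ)^2 * (a.choose t : ℝ))) := by
        rw [Finset.mul_sum]
    _ ≤ K ^ 2 * (2 / (a:ℝ)) := by
        apply mul_le_mul_of_nonneg_left hsum (by positivity)
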